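/- For every δ ∈ (0, 1/2) and every x₂ ∈ ℝ with |x₂| ≤ δ/√2, the denominator √(1 − x₂²) − √(δ² − x₂²) is positive and the quantity a_δ(x₂) = (√(1 − x₂²) − |x₂|) / (√(1 − x₂²) − √(δ² − x₂²)) satisfies 1 ≤ a_δ(x₂) ≤ 1/(1 − δ) ≤ 2. -/
import Mathlib


/-- For `δ ∈ (0, 1/2)` and `|x₂| ≤ δ/√2`, the denominator
`√(1 − x₂²) − √(δ² − x₂²)` is positive and the stretch factor
`a_δ(x₂) = (√(1 − x₂²) − |x₂|) / (√(1 − x₂²) − √(δ² − x₂²))` satisfies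
`1 ≤ a_δ(x₂) ≤ 1/(1 − δ) ≤ 2`. -/
theorem stretch_factor_bounds (δ x₂ : ℝ) (hδ : δ ∈ Set.Ioo (0 : ℝ) (1 / 2))
    (hx : |x₂| ≤ δ / Real.sqrt 2) :
    0 < Real.sqrt (1 - x₂ ^ 2) - Real.sqrt (δ ^ 2 - x₂ ^ 2) ∧
    1 ≤ (Real.sqrt (1 - x₂ ^ 2) - |x₂|) /
        (Real.sqrt (1 - x₂ ^ 2) - Real.sqrt (δ ^ 2 - x₂ ^ 2)) ∧
    (Real.sqrt (1 - x₂ ^ 2) - |x₂|) /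
        (Real.sqrt (1 - x₂ ^ 2) - Real.sqrt (δ ^ 2 - x₂ ^ 2)) ≤ 1 / (1 - δ) ∧
    1 / (1 - δ) ≤ 2 := by
  obtain ⟨hδ0, hδ1⟩ := hδ
  have hx2 : 2 * x₂ ^ 2 ≤ δ ^ 2 := by
    have h2 : Real.sqrt 2 * Real.sqrt 2 = 2 := Real.mul_self_sqrt (by norm_num)
    have h2pos : (0:ℝ) < Real.sqrt 2 := Real.sqrt_pos.mpr (by norm_num)
    have := abs_nonneg x₂
    have hsq : |x₂| ^ 2 ≤ (δ / Real.sqrt 2) ^ 2 := by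
      exact pow_le_pow_left₀ this hx 2
    rw [sq_abs, div_pow, Real.sq_sqrt (by norm_num : (0:ℝ) ≤ 2)] at hsq
    linarith
  have hd2 : (0:ℝ) ≤ δ ^ 2 - x₂ ^ 2 := by nlinarith
  set s := Real.sqrt (1 - x₂ ^ 2) with hs
  set t := Real.sqrt (δ ^ 2 - x₂ ^ 2) with ht
  have hsnn : 0 ≤ s := Real.sqrt_nonneg _
  have htnn : 0 ≤ t := Real.sqrt_nonneg _
  have hts : t < s := by
    apply Real.sqrt_lt_sqrt hd2
    nlinarith
  have hpos : 0 < s - t := sub_pos.mpr hts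
  have habs : |x₂| ≤ t := by
    rw [ht, ← Real.sqrt_sq_eq_abs]
    exact Real.sqrt_le_sqrt (by nlinarith)
  have htds : t ≤ δ * s := by
    calc t ≤ Real.sqrt (δ ^ 2 * (1 - x₂ ^ 2)) := Real.sqrt_le_sqrt (by nlinarith [mul_nonneg (sq_nonneg x₂) (by nlinarith : (0:ℝ) ≤ 1 - δ ^ 2)])
      _ = δ * s := by rw [Real.sqrt_mul (by positivity), Real.sqrt_sq hδ0.le]
  refine ⟨hpos, (one_le_div hpos).mpr (by linarith), ?_, ?_⟩
  · rw [div_le_div_iff₀ hpos (by linarith)]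
    nlinarith [abs_nonneg x₂]
  · rw [div_le_iff₀ (by linarith)]
    linarith
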